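/- Let (𝕍,ω) be a symplectic vector space with Lagrangian decomposition 𝕍 = L₁ ⊕ L₂, let A ⊆ 𝕍 be Lagrangian, let I ⊆ L₁ be a subspace, and let Ā ⊆ 𝕍̄ = I^⊥/I be the isotropic reduction of A. Then the quadratic form q^Ā on Ā (defined via the reduced decomposition 𝕍̄ = (L₁/I) ⊕ (L₂ ∩ I^⊥)) is induced by the restriction of q^A to A ∩ I^⊥: for x, y ∈ A ∩ I^⊥ with images x̄, ȳ ∈ Ā, one has q^Ā(x̄, ȳ) = q^A(x, y). -/

import Mathlib

/-- Let `(𝕍,ω)` be a symplectic vector space with Lagrangian decomposition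
`𝕍 = L₁ ⊕ L₂`, let `A ⊆ 𝕍` be Lagrangian, let `I ⊆ L₁` be a subspace, and let
`Ā = (A ∩ I^⊥)/(A ∩ I) ⊆ 𝕍̄ = I^⊥/I` be the isotropic reduction of `A`. Then the quadratic
form `q^Ā` on `Ā` (defined via the reduced decomposition `𝕍̄ = (L₁/I) ⊕ (L₂ ∩ I^⊥)`) is
induced by the restriction of `q^A` to `A ∩ I^⊥`: for `x, y ∈ A ∩ I^⊥` with images
`x̄, ȳ ∈ 𝕍̄`, one has `q^Ā(x̄, ȳ) = q^A(x, y)`. -/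
theorem stmt_13 {k V : Type*} [Field k] [AddCommGroup V] [Module k V] [FiniteDimensional k V]
    (ω : LinearMap.BilinForm k V) (halt : ω.IsAlt) (hnd : ω.Nondegenerate)
    (L₁ L₂ A : Submodule k V)
    (hL₁ : ω.orthogonal L₁ = L₁) (hL₂ : ω.orthogonal L₂ = L₂) (hA : ω.orthogonal A = A)
    (h : IsCompl L₁ L₂)
    (I : Submodule k V) (hIL₁ : I ≤ L₁)
    (ωbar : LinearMap.BilinForm k
      ((ω.orthogonal I) ⧸ (I.comap (ω.orthogonal I).subtype)))
    (hcompat : ∀ x y : ω.orthogonal I,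
      ωbar (Submodule.Quotient.mk x) (Submodule.Quotient.mk y) = ω x y)
    (hbar : IsCompl
      (Submodule.map (I.comap (ω.orthogonal I).subtype).mkQ
        (L₁.comap (ω.orthogonal I).subtype))
      (Submodule.map (I.comap (ω.orthogonal I).subtype).mkQ
        (L₂.comap (ω.orthogonal I).subtype))) :
    ∀ x y : ω.orthogonal I, (x : V) ∈ A → (y : V) ∈ A →
      ωbar
        (Submodule.linearProjOfIsCompl _ _ hbar (Submodule.Quotient.mk x))
        (Submodule.linearProjOfIsCompl _ _ hbar.symm (Submodule.Quotient.mk y))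
      = ω (Submodule.linearProjOfIsCompl L₁ L₂ h (x : V))
          (Submodule.linearProjOfIsCompl L₂ L₁ h.symm (y : V)) := by
  intro x y _ _
  set J := I.comap (ω.orthogonal I).subtype with hJ
  have hL₁perp : L₁ ≤ ω.orthogonal I := by
    intro v hv
    rw [LinearMap.BilinForm.mem_orthogonal_iff]
    intro i hi
    have hv' : v ∈ ω.orthogonal L₁ := by rw [hL₁]; exact hv
    exact hv' _ (hIL₁ hi)
  have key : ∀ z : ω.orthogonal I,
      ∃ a b : ω.orthogonal I, (a : V) ∈ L₁ ∧ (b : V) ∈ L₂ ∧ a + b = z ∧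
        (a : V) = Submodule.linearProjOfIsCompl L₁ L₂ h (z : V) ∧
        (b : V) = Submodule.linearProjOfIsCompl L₂ L₁ h.symm (z : V) := by
    intro z
    set a₁ : V := (Submodule.linearProjOfIsCompl L₁ L₂ h (z : V) : V) with ha₁
    have ha₁L : a₁ ∈ L₁ := (Submodule.linearProjOfIsCompl L₁ L₂ h (z : V)).2
    have ha₁perp : a₁ ∈ ω.orthogonal I := hL₁perp ha₁L
    have hself := Submodule.projection_add_projection_eq_self h (z : V)
    have hb : (z : V) - a₁ = (Submodule.linearProjOfIsCompl L₂ L₁ h.symm (z : V) : V) := by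
      rw [ha₁]; exact sub_eq_iff_eq_add'.mpr hself.symm
    refine ⟨⟨a₁, ha₁perp⟩, z - ⟨a₁, ha₁perp⟩, ha₁L, ?_, by abel, rfl, ?_⟩
    · show (z : V) - a₁ ∈ L₂
      rw [hb]; exact (Submodule.linearProjOfIsCompl L₂ L₁ h.symm (z : V)).2
    · exact hb
  obtain ⟨a, b, haL, hbL, hab, hav, hbv⟩ := key x
  obtain ⟨c, d, hcL, hdL, hcd, hcv, hdv⟩ := key y
  have hma : (Submodule.Quotient.mk a : _ ⧸ J) ∈
      Submodule.map J.mkQ (L₁.comap (ω.orthogonal I).subtype) := ⟨a, haL, rfl⟩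
  have hmb : (Submodule.Quotient.mk b : _ ⧸ J) ∈
      Submodule.map J.mkQ (L₂.comap (ω.orthogonal I).subtype) := ⟨b, hbL, rfl⟩
  have hmc : (Submodule.Quotient.mk c : _ ⧸ J) ∈
      Submodule.map J.mkQ (L₁.comap (ω.orthogonal I).subtype) := ⟨c, hcL, rfl⟩
  have hmd : (Submodule.Quotient.mk d : _ ⧸ J) ∈
      Submodule.map J.mkQ (L₂.comap (ω.orthogonal I).subtype) := ⟨d, hdL, rfl⟩
  have hproj1 : Submodule.linearProjOfIsCompl _ _ hbar
      (Submodule.Quotient.mk x : _ ⧸ J) = ⟨Submodule.Quotient.mk a, hma⟩ := by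
    have hx : (Submodule.Quotient.mk x : _ ⧸ J)
        = Submodule.Quotient.mk a + Submodule.Quotient.mk b := by rw [← hab]; rfl
    rw [hx, map_add, show Submodule.linearProjOfIsCompl _ _ hbar (Submodule.Quotient.mk b : _ ⧸ J) = 0 from
      Submodule.linearProjOfIsCompl_apply_right' hbar hmb, add_zero]
    exact Submodule.linearProjOfIsCompl_apply_left hbar ⟨_, hma⟩
  have hproj2 : Submodule.linearProjOfIsCompl _ _ hbar.symm
      (Submodule.Quotient.mk y : _ ⧸ J) = ⟨Submodule.Quotient.mk d, hmd⟩ := by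
    have hy : (Submodule.Quotient.mk y : _ ⧸ J)
        = Submodule.Quotient.mk c + Submodule.Quotient.mk d := by rw [← hcd]; rfl
    rw [hy, map_add, show Submodule.linearProjOfIsCompl _ _ hbar.symm (Submodule.Quotient.mk c : _ ⧸ J) = 0 from
      Submodule.linearProjOfIsCompl_apply_right' hbar.symm hmc, zero_add]
    exact Submodule.linearProjOfIsCompl_apply_left hbar.symm ⟨_, hmd⟩
  rw [hproj1, hproj2]
  have := hcompat a d
  simp only [Submodule.coe_subtype] at this ⊢
  rw [this, hav, hdv]
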